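/- Let a < b and c < d be real numbers, Δ = [a,b] × [c,d], and let f : Δ → ℝ be coordinated convex on Δ and integrable on Δ. Then f((a+b)/2, (c+d)/2) ≤ (1/((b-a)(d-c))) ∫_a^b ∫_c^d f(x,y) dy dx. -/

import Mathlib

open MeasureTheory Set intervalIntegral

/-- Left Hermite–Hadamard inequality for coordinated convex functions:
`f((a+b)/2, (c+d)/2) ≤ (1/((b-a)(d-c))) ∫_a^b ∫_c^d f(x,y) dy dx`. -/
theorem hadamard_coordinated_convex_left
    (a b c d : ℝ) (hab : a < b) (hcd : c < d) (f : ℝ → ℝ → ℝ)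
    (hconv : ∀ t ∈ Icc (0:ℝ) 1, ∀ s ∈ Icc (0:ℝ) 1,
      ∀ x ∈ Icc a b, ∀ y ∈ Icc a b, ∀ u ∈ Icc c d, ∀ w ∈ Icc c d,
        f (t * x + (1 - t) * y) (s * u + (1 - s) * w) ≤
          t * s * f x u + s * (1 - t) * f y u + t * (1 - s) * f x w
            + (1 - t) * (1 - s) * f y w)
    (hint : IntegrableOn (fun p : ℝ × ℝ => f p.1 p.2) (Icc a b ×ˢ Icc c d)) :
    f ((a + b) / 2) ((c + d) / 2) ≤
      (1 / ((b - a) * (d - c))) * ∫ x in a..b, ∫ y in c..d, f x y := by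
  have hMpos : (0:ℝ) < (b - a) * (d - c) := by
    apply mul_pos <;> linarith
  set S : Set (ℝ × ℝ) := Icc a b ×ˢ Icc c d with hS
  have hSm : MeasurableSet S := measurableSet_Icc.prod measurableSet_Icc
  set J : ℝ := ∫ p in S, f p.1 p.2 with hJ
  -- reflection maps
  have hmp1 : MeasurePreserving (fun p : ℝ × ℝ => (a + b - p.1, p.2)) volume volume := by
    rw [Measure.volume_eq_prod]
    exact (Measure.measurePreserving_sub_left volume (a + b)).prod (MeasurePreserving.id volume)
  have hmp2 : MeasurePreserving (fun p : ℝ × ℝ => (p.1, c + d - p.2)) volume volume := by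
    rw [Measure.volume_eq_prod]
    exact (MeasurePreserving.id volume).prod (Measure.measurePreserving_sub_left volume (c + d))
  have hmp3 : MeasurePreserving (fun p : ℝ × ℝ => (a + b - p.1, c + d - p.2)) volume volume := by
    rw [Measure.volume_eq_prod]
    exact (Measure.measurePreserving_sub_left volume (a + b)).prod
      (Measure.measurePreserving_sub_left volume (c + d))
  have hemb1 : MeasurableEmbedding (fun p : ℝ × ℝ => (a + b - p.1, p.2)) :=
    ((Homeomorph.subLeft (a + b)).prodCongr (Homeomorph.refl ℝ)).measurableEmbedding
  have hemb2 : MeasurableEmbedding (fun p : ℝ × ℝ => (p.1, c + d - p.2)) :=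
    ((Homeomorph.refl ℝ).prodCongr (Homeomorph.subLeft (c + d))).measurableEmbedding
  have hemb3 : MeasurableEmbedding (fun p : ℝ × ℝ => (a + b - p.1, c + d - p.2)) :=
    ((Homeomorph.subLeft (a + b)).prodCongr (Homeomorph.subLeft (c + d))).measurableEmbedding
  have hrefl1 : ∀ x : ℝ, a + b - x ∈ Icc a b ↔ x ∈ Icc a b := by
    intro x; simp only [mem_Icc]; constructor <;> intro h <;> constructor <;> linarith [h.1, h.2]
  have hrefl2 : ∀ y : ℝ, c + d - y ∈ Icc c d ↔ y ∈ Icc c d := by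
    intro y; simp only [mem_Icc]; constructor <;> intro h <;> constructor <;> linarith [h.1, h.2]
  have hpre1 : (fun p : ℝ × ℝ => (a + b - p.1, p.2)) ⁻¹' S = S := by
    ext p; simp only [hS, mem_preimage, mem_prod, hrefl1]
  have hpre2 : (fun p : ℝ × ℝ => (p.1, c + d - p.2)) ⁻¹' S = S := by
    ext p; simp only [hS, mem_preimage, mem_prod, hrefl2]
  have hpre3 : (fun p : ℝ × ℝ => (a + b - p.1, c + d - p.2)) ⁻¹' S = S := by
    ext p; simp only [hS, mem_preimage, mem_prod, hrefl1, hrefl2]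
  -- integrability of the four reflected functions
  have hint1 : IntegrableOn (fun p : ℝ × ℝ => f (a + b - p.1) p.2) S := by
    have := (hmp1.integrableOn_comp_preimage hemb1 (f := fun p : ℝ × ℝ => f p.1 p.2)
      (s := S)).2 hint
    rwa [hpre1] at this
  have hint2 : IntegrableOn (fun p : ℝ × ℝ => f p.1 (c + d - p.2)) S := by
    have := (hmp2.integrableOn_comp_preimage hemb2 (f := fun p : ℝ × ℝ => f p.1 p.2)
      (s := S)).2 hint
    rwa [hpre2] at this
  have hint3 : IntegrableOn (fun p : ℝ × ℝ => f (a + b - p.1) (c + d - p.2)) S := by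
    have := (hmp3.integrableOn_comp_preimage hemb3 (f := fun p : ℝ × ℝ => f p.1 p.2)
      (s := S)).2 hint
    rwa [hpre3] at this
  -- integrals of reflected functions equal J
  have hI1 : ∫ p in S, f (a + b - p.1) p.2 = J := by
    have := hmp1.setIntegral_preimage_emb hemb1 (fun p : ℝ × ℝ => f p.1 p.2) S
    rwa [hpre1] at this
  have hI2 : ∫ p in S, f p.1 (c + d - p.2) = J := by
    have := hmp2.setIntegral_preimage_emb hemb2 (fun p : ℝ × ℝ => f p.1 p.2) S
    rwa [hpre2] at this
  have hI3 : ∫ p in S, f (a + b - p.1) (c + d - p.2) = J := by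
    have := hmp3.setIntegral_preimage_emb hemb3 (fun p : ℝ × ℝ => f p.1 p.2) S
    rwa [hpre3] at this
  -- pointwise inequality
  have hpt : ∀ p ∈ S, f ((a + b) / 2) ((c + d) / 2) ≤
      (1/4 : ℝ) * (f p.1 p.2 + f (a + b - p.1) p.2 + f p.1 (c + d - p.2)
        + f (a + b - p.1) (c + d - p.2)) := by
    rintro ⟨x, y⟩ hp
    obtain ⟨hx, hy⟩ := hp
    have h12 : (1/2 : ℝ) ∈ Icc (0:ℝ) 1 := by norm_num
    have := hconv (1/2) h12 (1/2) h12 x hx (a + b - x) ((hrefl1 x).2 hx)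
      y hy (c + d - y) ((hrefl2 y).2 hy)
    have e1 : (1/2 : ℝ) * x + (1 - 1/2) * (a + b - x) = (a + b) / 2 := by ring
    have e2 : (1/2 : ℝ) * y + (1 - 1/2) * (c + d - y) = (c + d) / 2 := by ring
    rw [e1, e2] at this
    simp only
    nlinarith [this]
  -- volume of S
  have hvol : volume S = ENNReal.ofReal ((b - a) * (d - c)) := by
    rw [hS, Measure.volume_eq_prod, Measure.prod_prod, Real.volume_Icc, Real.volume_Icc,
      ENNReal.ofReal_mul (by linarith)]
  -- monotonicity of integral
  have hintsum : IntegrableOn (fun p : ℝ × ℝ => (1/4 : ℝ) * (f p.1 p.2 + f (a + b - p.1) p.2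
      + f p.1 (c + d - p.2) + f (a + b - p.1) (c + d - p.2))) S :=
    (((hint.add hint1).add hint2).add hint3).const_mul _
  have hconst : IntegrableOn (fun _ : ℝ × ℝ => f ((a + b) / 2) ((c + d) / 2)) S := by
    exact integrableOn_const (by rw [hvol]; exact ENNReal.ofReal_ne_top)
  have hmono := setIntegral_mono_on hconst hintsum hSm hpt
  have hLHS : ∫ _ in S, f ((a + b) / 2) ((c + d) / 2) =
      ((b - a) * (d - c)) * f ((a + b) / 2) ((c + d) / 2) := by
    rw [setIntegral_const, measureReal_def, hvol, ENNReal.toReal_ofReal hMpos.le, smul_eq_mul]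
  have hintA : IntegrableOn (fun p : ℝ × ℝ => f p.1 p.2 + f (a + b - p.1) p.2) S :=
    hint.add hint1
  have hintB : IntegrableOn (fun p : ℝ × ℝ => f p.1 p.2 + f (a + b - p.1) p.2
      + f p.1 (c + d - p.2)) S := hintA.add hint2
  have hRHS : ∫ p in S, (1/4 : ℝ) * (f p.1 p.2 + f (a + b - p.1) p.2
      + f p.1 (c + d - p.2) + f (a + b - p.1) (c + d - p.2)) = J := by
    rw [MeasureTheory.integral_const_mul, integral_add hintB hint3, integral_add hintA hint2,
      integral_add hint hint1, hI1, hI2, hI3, ← hJ]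
    ring
  rw [hLHS, hRHS] at hmono
  -- identify J with the iterated interval integral
  have hiter : J = ∫ x in a..b, ∫ y in c..d, f x y := by
    have h1 : J = ∫ x in Icc a b, ∫ y in Icc c d, f x y := by
      rw [hJ, hS, Measure.volume_eq_prod ℝ ℝ]
      exact setIntegral_prod (fun p : ℝ × ℝ => f p.1 p.2) hint
    rw [h1]
    have h2 : ∀ x : ℝ, (∫ y in Icc c d, f x y) = ∫ y in c..d, f x y := fun x => by
      rw [intervalIntegral.integral_of_le hcd.le, integral_Icc_eq_integral_Ioc]
    simp_rw [h2]
    rw [intervalIntegral.integral_of_le hab.le, integral_Icc_eq_integral_Ioc]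
  rw [← hiter, one_div, inv_mul_eq_div, le_div_iff₀ hMpos, mul_comm]
  exact hmono
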